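/- Let y : [0,1] → ℝ be differentiable with bounded solvable derivative and y(0) = y(1) = y'(0) = y'(1) = 0. Then for every subinterval [a,b] ⊆ [0,1] with a < b, the function (1/4)·y[a,b] is differentiable, its derivative is bounded and solvable, and its solvable ranking equals that of y: |(1/4)·y[a,b]|_SV = |y|_SV. -/

import Mathlib

open Set Filter Topology

noncomputable section

/-- The set of points of `A` at which the restriction `f ↾ A` (with the subspace
topology on `A`) is discontinuous. -/
def discSet {X Y : Type*} [TopologicalSpace X] [TopologicalSpace Y]
    (f : X → Y) (A : Set X) : Set X :=
  {x | x ∈ A ∧ ¬ ContinuousWithinAt f A x}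

/-- `f` is of Baire class one on `E`: it is the pointwise limit on `E` of a
sequence of functions continuous on `E`. -/
def BaireOne {X Y : Type*} [TopologicalSpace X] [TopologicalSpace Y]
    (f : X → Y) (E : Set X) : Prop :=
  ∃ g : ℕ → X → Y, (∀ n, ContinuousOn (g n) E) ∧
    ∀ x ∈ E, Tendsto (fun n => g n x) atTop (nhds (f x))

/-- `f` is solvable on `E`: it is of Baire class one and for every closed
`K ⊆ E` the set of discontinuity points of `f ↾ K` is closed. -/
def SolvableOn {X Y : Type*} [TopologicalSpace X] [TopologicalSpace Y]
    (f : X → Y) (E : Set X) : Prop :=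
  BaireOne f E ∧ ∀ K : Set X, K ⊆ E → IsClosed K → IsClosed (discSet f K)

/-- The transfinite sequence of `f`-removed sets on `E`:
`E_0 = E`, `E_{α+1} = discSet f E_α`, and `E_λ = ⋂_{β<λ} E_β` at limits. -/
def removedSets {X Y : Type*} [TopologicalSpace X] [TopologicalSpace Y]
    (f : X → Y) (E : Set X) (α : Ordinal.{0}) : Set X :=
  Ordinal.limitRecOn α E (fun _ S => discSet f S)
    (fun o _ ih => ⋂ (β : Ordinal.{0}) (h : β < o), ih β h)

/-- `y` is differentiable on `[0,1]` with derivative `y'` (one-sided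
derivatives at the endpoints). -/
def DiffOnIcc (y y' : ℝ → ℝ) : Prop :=
  ∀ x ∈ Set.Icc (0:ℝ) 1, HasDerivWithinAt y (y' x) (Set.Icc (0:ℝ) 1) x

/-- The solvable ranking: the least ordinal `α` for which the `α`-th
`y'`-removed set on `[0,1]` is empty. -/
def solvRank (y' : ℝ → ℝ) : Ordinal.{0} :=
  sInf {α : Ordinal.{0} | removedSets y' (Set.Icc (0:ℝ) 1) α = ∅}


/-- `f[a,b]`: the rescaled copy of `f` supported on `[a,b]`. -/
def rescale (f : ℝ → ℝ) (a b : ℝ) : ℝ → ℝ := fun x =>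
  if x ∈ Set.Icc a b then (b - a) * f ((x - a) / (b - a)) else 0

/-- A set of finite sequences closed under initial segments. -/
def PrefixClosed (T : Set (List ℕ)) : Prop := ∀ s ∈ T, ∀ t : List ℕ, t <+: s → t ∈ T

/-- A well-founded tree: closed under initial segments and with no infinite branch. -/
def IsWFTree (T : Set (List ℕ)) : Prop :=
  PrefixClosed T ∧ ¬ ∃ g : ℕ → ℕ, ∀ n : ℕ, (List.range n).map g ∈ T

/-- The `n`-th subtree `T_n = {σ : n⌢σ ∈ T}`. -/
def subtree (T : Set (List ℕ)) (n : ℕ) : Set (List ℕ) := {σ | n :: σ ∈ T}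

/-- `G` is the family of functions associated to well-founded trees by the recursion
`G ∅ = 0` and `G T = base + c • Σ_n (G T_n)[a_n, b_n]` for nonempty `T`. -/
def TreeFamSpec (base : ℝ → ℝ) (c : ℝ) (a b : ℕ → ℝ)
    (G : Set (List ℕ) → ℝ → ℝ) : Prop :=
  G ∅ = (fun _ => 0) ∧
  ∀ T : Set (List ℕ), IsWFTree T → T.Nonempty → ∀ x : ℝ,
    G T x = base x + c * ∑' n : ℕ, rescale (G (subtree T n)) (a n) (b n) x


/-! ### Auxiliary lemmas -/

section RemovedSetsBasic
variable {X Y : Type*} [TopologicalSpace X] [TopologicalSpace Y] (f : X → Y) (E : Set X)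

lemma removedSets_zero' : removedSets f E 0 = E := Ordinal.limitRecOn_zero _ _ _

lemma removedSets_succ' (α : Ordinal.{0}) :
    removedSets f E (Order.succ α) = discSet f (removedSets f E α) :=
  Ordinal.limitRecOn_succ _ _ _ _

lemma removedSets_limit' {l : Ordinal.{0}} (hl : Order.IsSuccLimit l) :
    removedSets f E l = ⋂ (β : Ordinal.{0}) (_ : β < l), removedSets f E β :=
  Ordinal.limitRecOn_limit _ _ _ _ hl

lemma removedSets_subset' (α : Ordinal.{0}) : removedSets f E α ⊆ E := by
  induction α using Ordinal.limitRecOn with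
  | zero => rw [removedSets_zero']
  | add_one α ih => rw [Ordinal.add_one_eq_succ, removedSets_succ']; exact fun x hx => ih hx.1
  | limit l hl ih =>
      rw [removedSets_limit' f E hl]
      exact fun x hx => removedSets_zero' f E ▸ (mem_iInter₂.1 hx 0 hl.pos)

end RemovedSetsBasic

lemma removed_transfer' (G' Y' : ℝ → ℝ) (ψ : ℝ ≃ₜ ℝ)
    (hsub : ψ '' Icc 0 1 ⊆ Icc (0:ℝ) 1)
    (hB : discSet G' (Icc 0 1) = ψ '' discSet Y' (Icc 0 1))
    (hA : ∀ S : Set ℝ, S ⊆ Icc 0 1 → discSet G' (ψ '' S) = ψ '' discSet Y' S) :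
    ∀ α : Ordinal.{0}, 1 ≤ α →
      removedSets G' (Icc 0 1) α = ψ '' removedSets Y' (Icc 0 1) α := by
  intro α
  induction α using Ordinal.limitRecOn with
  | zero => intro h; exact absurd h (by simp)
  | add_one α ih =>
      intro _
      rw [Ordinal.add_one_eq_succ]
      rcases eq_or_ne α 0 with rfl | hα
      · rw [removedSets_succ', removedSets_zero', removedSets_succ', removedSets_zero']
        exact hB
      · rw [removedSets_succ', removedSets_succ', ih (Ordinal.one_le_iff_ne_zero.2 hα)]
        exact hA _ (removedSets_subset' Y' _ α)
  | limit l hl ih =>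
      intro _
      rw [removedSets_limit' _ _ hl, removedSets_limit' _ _ hl]
      have h1l : (1 : Ordinal) < l := by
        have := hl.succ_lt hl.pos
        rwa [Ordinal.succ_zero] at this
      ext x
      simp only [mem_iInter]
      constructor
      · intro h
        have hx1 := h 1 h1l
        rw [ih 1 h1l le_rfl] at hx1
        obtain ⟨t, ht1, rfl⟩ := hx1
        refine ⟨t, ?_, rfl⟩
        simp only [mem_iInter]
        intro β hβ
        rcases eq_or_ne β 0 with rfl | hβ0
        · rw [removedSets_zero']
          exact removedSets_subset' Y' _ 1 ht1
        · have := h β hβ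
          rw [ih β hβ (Ordinal.one_le_iff_ne_zero.2 hβ0)] at this
          obtain ⟨s, hs, heq⟩ := this
          rwa [← ψ.injective heq]
      · rintro ⟨t, ht, rfl⟩ β hβ
        simp only [mem_iInter] at ht
        rcases eq_or_ne β 0 with rfl | hβ0
        · rw [removedSets_zero']
          have ht0 := ht 0 hl.pos
          rw [removedSets_zero'] at ht0
          exact hsub (mem_image_of_mem _ ht0)
        · rw [ih β hβ (Ordinal.one_le_iff_ne_zero.2 hβ0)]
          exact mem_image_of_mem _ (ht β hβ)

lemma cwa_image' {X Y Z : Type*} [TopologicalSpace X] [TopologicalSpace Y] [TopologicalSpace Z]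
    (e : X ≃ₜ Y) (g : Y → Z) (S : Set X) (t : X) :
    ContinuousWithinAt g (e '' S) (e t) ↔ ContinuousWithinAt (g ∘ e) S t := by
  rw [ContinuousWithinAt, ContinuousWithinAt,
    ← e.isEmbedding.map_nhdsWithin_eq, tendsto_map'_iff]
  rfl

lemma cwa_const_mul_iff' (c : ℝ) (hc : c ≠ 0) (f : ℝ → ℝ) (S : Set ℝ) (x : ℝ) :
    ContinuousWithinAt (fun z => c * f z) S x ↔ ContinuousWithinAt f S x := by
  constructor
  · intro h
    have h2 := (continuousWithinAt_const (b := c⁻¹)).mul h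
    exact h2.congr (fun z _ => (inv_mul_cancel_left₀ hc (f z)).symm)
      (inv_mul_cancel_left₀ hc (f x)).symm
  · exact fun h => continuousWithinAt_const.mul h

/-- The candidate derivative of `(1/4) • y[a,b]`. -/
noncomputable def gprime (y' : ℝ → ℝ) (a b : ℝ) : ℝ → ℝ := fun x =>
  if x ∈ Set.Icc a b then (1/4) * y' ((x - a) / (b - a)) else 0

/-- The affine homeomorphism `t ↦ (b-a)t + a`. -/
noncomputable def psiH (a b : ℝ) (hab : a < b) : ℝ ≃ₜ ℝ :=
  affineHomeomorph (b - a) a (sub_pos.2 hab).ne'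

section Transfer
variable {y' : ℝ → ℝ} {a b : ℝ}

lemma psiH_apply (hab : a < b) (t : ℝ) : psiH a b hab t = (b - a) * t + a := rfl

lemma psiH_image_Icc01 (hab : a < b) : psiH a b hab '' Icc 0 1 = Icc a b := by
  rw [psiH, affineHomeomorph_image_Icc _ _ _ _ (sub_pos.2 hab)]
  norm_num

lemma gprime_psi (hab : a < b) {t : ℝ} (ht : t ∈ Icc (0:ℝ) 1) :
    gprime y' a b (psiH a b hab t) = (1/4) * y' t := by
  have hmem : psiH a b hab t ∈ Icc a b :=
    psiH_image_Icc01 hab ▸ mem_image_of_mem _ ht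
  have hba : b - a ≠ 0 := (sub_pos.2 hab).ne'
  rw [gprime, if_pos hmem, psiH_apply]
  congr 2
  field_simp
  ring

lemma cwa_transfer (hab : a < b) {S : Set ℝ} (hS : S ⊆ Icc 0 1) {t : ℝ} (ht : t ∈ S) :
    ContinuousWithinAt (gprime y' a b) (psiH a b hab '' S) (psiH a b hab t) ↔
      ContinuousWithinAt y' S t := by
  rw [cwa_image']
  have hcongr : ∀ z ∈ S, (gprime y' a b ∘ psiH a b hab) z = (1/4) * y' z :=
    fun z hz => gprime_psi hab (hS hz)
  rw [continuousWithinAt_congr_of_mem hcongr ht,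
    cwa_const_mul_iff' (1/4) (by norm_num)]

lemma discSet_transfer (hab : a < b) {S : Set ℝ} (hS : S ⊆ Icc 0 1) :
    discSet (gprime y' a b) (psiH a b hab '' S) = psiH a b hab '' discSet y' S := by
  ext x
  constructor
  · rintro ⟨⟨t, ht, rfl⟩, hx⟩
    exact ⟨t, ⟨ht, fun hc => hx ((cwa_transfer hab hS ht).2 hc)⟩, rfl⟩
  · rintro ⟨t, ⟨ht, hdisc⟩, rfl⟩
    exact ⟨mem_image_of_mem _ ht, fun hc => hdisc ((cwa_transfer hab hS ht).1 hc)⟩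

lemma gprime_zero_outside (hab : a < b) (h0' : y' 0 = 0) (h1' : y' 1 = 0)
    {z : ℝ} (hz : z ∈ Iic a ∪ Ici b) : gprime y' a b z = 0 := by
  rcases hz with hz | hz
  · by_cases hmem : z ∈ Icc a b
    · have hza : z = a := le_antisymm hz hmem.1
      subst hza
      rw [gprime, if_pos hmem, sub_self, zero_div, h0', mul_zero]
    · rw [gprime, if_neg hmem]
  · by_cases hmem : z ∈ Icc a b
    · have hzb : z = b := le_antisymm hmem.2 hz
      subst hzb
      rw [gprime, if_pos hmem, div_self (sub_pos.2 hab).ne', h1', mul_zero]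
    · rw [gprime, if_neg hmem]

lemma discSet_restrict (hab : a < b) (h0' : y' 0 = 0) (h1' : y' 1 = 0) (K : Set ℝ) :
    discSet (gprime y' a b) K = discSet (gprime y' a b) (K ∩ Icc a b) := by
  have hcov : K = (K ∩ Icc a b) ∪ (K ∩ (Iic a ∪ Ici b)) := by
    rw [← Set.inter_union_distrib_left]
    rw [show Icc a b ∪ (Iic a ∪ Ici b) = univ from ?_, Set.inter_univ]
    apply eq_univ_of_forall
    intro z
    rcases le_or_gt z a with h | h
    · exact Or.inr (Or.inl h)
    rcases le_or_gt b z with h' | h'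
    · exact Or.inr (Or.inr h')
    · exact Or.inl ⟨h.le, h'.le⟩
  ext x
  constructor
  · rintro ⟨hxK, hx⟩
    have hxab : x ∈ Icc a b := by
      by_contra hxab
      apply hx
      have hev : gprime y' a b =ᶠ[nhds x] (fun _ => 0) := by
        filter_upwards [isClosed_Icc.isOpen_compl.mem_nhds hxab] with z hz
        rw [gprime, if_neg hz]
      exact ((continuousAt_const (y := (0:ℝ))).congr_of_eventuallyEq hev).continuousWithinAt
    refine ⟨⟨hxK, hxab⟩, fun hc => hx ?_⟩
    rw [hcov]
    refine hc.union ?_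
    rcases eq_or_lt_of_le hxab.1 with heq | hax
    · exact continuousWithinAt_const.congr
        (fun z hz => gprime_zero_outside hab h0' h1' hz.2)
        (gprime_zero_outside hab h0' h1' (Or.inl (heq ▸ le_refl x)))
    rcases eq_or_lt_of_le hxab.2 with heq | hxb
    · exact continuousWithinAt_const.congr
        (fun z hz => gprime_zero_outside hab h0' h1' hz.2)
        (gprime_zero_outside hab h0' h1' (Or.inr heq.ge))
    · apply continuousWithinAt_of_notMem_closure
      intro hcl
      have : x ∈ Iic a ∪ Ici b := by
        have hsub : closure (K ∩ (Iic a ∪ Ici b)) ⊆ Iic a ∪ Ici b :=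
          closure_minimal inter_subset_right (isClosed_Iic.union isClosed_Ici)
        exact hsub hcl
      rcases this with h | h
      · exact absurd h (not_le.2 hax)
      · exact absurd h (not_le.2 hxb)
  · rintro ⟨⟨hxK, hxab⟩, hx⟩
    exact ⟨hxK, fun hc => hx (hc.mono inter_subset_left)⟩

lemma discSet_Icc01 (hab : a < b) (h0' : y' 0 = 0) (h1' : y' 1 = 0)
    (hsub : Set.Icc a b ⊆ Set.Icc (0:ℝ) 1) :
    discSet (gprime y' a b) (Icc 0 1) = psiH a b hab '' discSet y' (Icc 0 1) := by
  rw [discSet_restrict hab h0' h1' (Icc 0 1),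
    inter_eq_self_of_subset_right hsub, ← psiH_image_Icc01 hab,
    discSet_transfer hab subset_rfl]

end Transfer

lemma diff_main (y y' : ℝ → ℝ) (hdiff : DiffOnIcc y y')
    (h0 : y 0 = 0) (h1 : y 1 = 0) (h0' : y' 0 = 0) (h1' : y' 1 = 0)
    (a b : ℝ) (hab : a < b) (hsub : Set.Icc a b ⊆ Set.Icc (0:ℝ) 1) :
    DiffOnIcc (fun x => (1/4) * rescale y a b x) (gprime y' a b) := by
  have hba : (0:ℝ) < b - a := sub_pos.2 hab
  set φ : ℝ → ℝ := fun x => (x - a) / (b - a) with hφdef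
  have hφd : ∀ x : ℝ, HasDerivAt φ (1 / (b - a)) x := fun x => by
    simpa using ((hasDerivAt_id x).sub_const a).div_const (b - a)
  have hmaps : MapsTo φ (Icc a b) (Icc (0:ℝ) 1) := by
    intro z hz
    constructor
    · exact div_nonneg (sub_nonneg.2 hz.1) hba.le
    · rw [div_le_one hba]; linarith [hz.2]
  have hφa : φ a = 0 := by simp [hφdef]
  have hφb : φ b = 1 := by simp [hφdef, div_self hba.ne']
  have hres0 : ∀ z, z ∉ Icc a b → rescale y a b z = 0 := fun z hz => if_neg hz
  set g : ℝ → ℝ := fun x => (1/4) * rescale y a b x with hgdef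
  have hg_on : ∀ z ∈ Icc a b, g z = ((1/4) * (b - a)) * y (φ z) := by
    intro z hz
    simp only [hgdef, rescale, if_pos hz]
    ring
  have hg_left : ∀ z ∈ Iic a, g z = 0 := by
    intro z hz
    by_cases hmem : z ∈ Icc a b
    · have : z = a := le_antisymm hz hmem.1
      subst this
      rw [hg_on z hmem, hφa, h0, mul_zero]
    · simp [hgdef, hres0 z hmem]
  have hg_right : ∀ z ∈ Ici b, g z = 0 := by
    intro z hz
    by_cases hmem : z ∈ Icc a b
    · have : z = b := le_antisymm hmem.2 hz
      subst this
      rw [hg_on z hmem, hφb, h1, mul_zero]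
    · simp [hgdef, hres0 z hmem]
  intro x hx
  by_cases hmem : x ∈ Icc a b
  · rcases eq_or_lt_of_le hmem.1 with heq | hax
    · -- x = a
      subst heq
      have gpa : gprime y' a b a = 0 := by
        rw [gprime, if_pos hmem]
        simp [h0']
      rw [gpa]
      have hyd : HasDerivWithinAt y (y' 0) (Icc (0:ℝ) 1) 0 :=
        hdiff 0 ⟨le_refl 0, zero_le_one⟩
      have hφw : HasDerivWithinAt φ (1 / (b - a)) (Icc a b) a :=
        (hφd a).hasDerivWithinAt
      have hcomp : HasDerivWithinAt (y ∘ φ) (y' 0 * (1 / (b - a))) (Icc a b) a :=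
        HasDerivWithinAt.comp_of_eq (hh₂ := hyd) (hh := hφw) (hst := hmaps) (hy := hφa.symm)
      have h2 : HasDerivWithinAt g 0 (Icc a b) a := by
        have := hcomp.const_mul ((1/4) * (b - a))
        have heq0 : ((1/4) * (b - a)) * (y' 0 * (1 / (b - a))) = 0 := by
          rw [h0']; ring
        rw [heq0] at this
        exact this.congr hg_on (hg_on a hmem)
      have h1' : HasDerivWithinAt g 0 (Iic a) a :=
        (hasDerivWithinAt_const a (Iic a) 0).congr hg_left (hg_left a (mem_Iic.2 le_rfl))
      have h3 : HasDerivWithinAt g 0 (Ici b) a := by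
        have : a ∉ closure (Ici b) := by
          rw [isClosed_Ici.closure_eq]
          exact not_le.2 hab
        exact HasFDerivWithinAt.of_notMem_closure this
      refine ((h1'.union h2).union h3).mono fun z _ => ?_
      rcases le_or_gt z a with h | h
      · exact Or.inl (Or.inl h)
      rcases le_or_gt b z with h' | h'
      · exact Or.inr h'
      · exact Or.inl (Or.inr ⟨h.le, h'.le⟩)
    rcases eq_or_lt_of_le hmem.2 with heq | hxb
    · -- x = b
      have heq2 : b = x := heq.symm
      subst heq2
      have gpb : gprime y' a b b = 0 := by
        rw [gprime, if_pos hmem]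
        simp [div_self hba.ne', h1']
      rw [gpb]
      have hyd : HasDerivWithinAt y (y' 1) (Icc (0:ℝ) 1) 1 :=
        hdiff 1 ⟨zero_le_one, le_refl 1⟩
      have hφw : HasDerivWithinAt φ (1 / (b - a)) (Icc a b) b :=
        (hφd b).hasDerivWithinAt
      have hcomp : HasDerivWithinAt (y ∘ φ) (y' 1 * (1 / (b - a))) (Icc a b) b :=
        HasDerivWithinAt.comp_of_eq (hh₂ := hyd) (hh := hφw) (hst := hmaps) (hy := hφb.symm)
      have h2 : HasDerivWithinAt g 0 (Icc a b) b := by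
        have := hcomp.const_mul ((1/4) * (b - a))
        have heq0 : ((1/4) * (b - a)) * (y' 1 * (1 / (b - a))) = 0 := by
          rw [h1']; ring
        rw [heq0] at this
        exact this.congr hg_on (hg_on b hmem)
      have h3 : HasDerivWithinAt g 0 (Ici b) b :=
        (hasDerivWithinAt_const b (Ici b) 0).congr hg_right (hg_right b (mem_Ici.2 le_rfl))
      have h1'' : HasDerivWithinAt g 0 (Iic a) b := by
        have : b ∉ closure (Iic a) := by
          rw [isClosed_Iic.closure_eq]
          exact not_le.2 hab
        exact HasFDerivWithinAt.of_notMem_closure this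
      refine ((h1''.union h2).union h3).mono fun z _ => ?_
      rcases le_or_gt z a with h | h
      · exact Or.inl (Or.inl h)
      rcases le_or_gt b z with h' | h'
      · exact Or.inr h'
      · exact Or.inl (Or.inr ⟨h.le, h'.le⟩)
    · -- x ∈ Ioo a b
      have hφx : φ x ∈ Ioo (0:ℝ) 1 := by
        constructor
        · exact div_pos (sub_pos.2 hax) hba
        · rw [div_lt_one hba]; linarith
      have hyd : HasDerivAt y (y' (φ x)) (φ x) :=
        (hdiff (φ x) ⟨hφx.1.le, hφx.2.le⟩).hasDerivAt
          (Icc_mem_nhds hφx.1 hφx.2)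
      have hcomp : HasDerivAt (y ∘ φ) (y' (φ x) * (1 / (b - a))) x :=
        hyd.comp x (hφd x)
      have hmul := hcomp.const_mul ((1/4) * (b - a))
      have hev : g =ᶠ[nhds x] fun z => ((1/4) * (b - a)) * (y ∘ φ) z := by
        filter_upwards [isOpen_Ioo.mem_nhds (⟨hax, hxb⟩ : x ∈ Ioo a b)] with z hz
        exact hg_on z ⟨hz.1.le, hz.2.le⟩
      have hg' : HasDerivAt g (((1/4) * (b - a)) * (y' (φ x) * (1 / (b - a)))) x :=
        hmul.congr_of_eventuallyEq hev
      have hval : ((1/4) * (b - a)) * (y' (φ x) * (1 / (b - a))) = gprime y' a b x := by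
        rw [gprime, if_pos hmem]
        field_simp
        ring
      rw [← hval]
      exact hg'.hasDerivWithinAt
  · -- x outside [a,b]
    have gpx : gprime y' a b x = 0 := by rw [gprime, if_neg hmem]
    rw [gpx]
    have hev : g =ᶠ[nhds x] fun _ => 0 := by
      filter_upwards [isClosed_Icc.isOpen_compl.mem_nhds hmem] with z hz
      simp [hgdef, hres0 z hz]
    exact ((hasDerivAt_const x 0).congr_of_eventuallyEq hev).hasDerivWithinAt

lemma baire_main (y' : ℝ → ℝ) (h0' : y' 0 = 0) (h1' : y' 1 = 0)
    (a b : ℝ) (hab : a < b) (hsub : Set.Icc a b ⊆ Set.Icc (0:ℝ) 1)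
    (hB : BaireOne y' (Set.Icc (0:ℝ) 1)) :
    BaireOne (gprime y' a b) (Set.Icc (0:ℝ) 1) := by
  obtain ⟨gs, hgc, hgt⟩ := hB
  have hba : (0:ℝ) < b - a := sub_pos.2 hab
  set φ : ℝ → ℝ := fun x => (x - a) / (b - a) with hφdef
  have hφc : Continuous φ := (continuous_id.sub continuous_const).div_const _
  have hmaps : MapsTo φ (Icc a b) (Icc (0:ℝ) 1) := by
    intro z hz
    exact ⟨div_nonneg (sub_nonneg.2 hz.1) hba.le, by rw [div_le_one hba]; linarith [hz.2]⟩
  have hφa : φ a = 0 := by simp [hφdef]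
  have hφb : φ b = 1 := by simp [hφdef, div_self hba.ne']
  set inner : ℕ → ℝ → ℝ :=
    fun n t => (1/4) * (gs n t - ((1 - t) * gs n 0 + t * gs n 1)) with hinner
  have hinner0 : ∀ n, inner n 0 = 0 := by intro n; simp [hinner]
  have hinner1 : ∀ n, inner n 1 = 0 := by intro n; simp [hinner]
  have hinnerc : ∀ n, ContinuousOn (inner n) (Icc (0:ℝ) 1) := by
    intro n
    apply continuousOn_const.mul
    apply (hgc n).sub
    apply ContinuousOn.add
    · exact (continuous_const.sub continuous_id).continuousOn.mul continuousOn_const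
    · exact continuous_id.continuousOn.mul continuousOn_const
  refine ⟨fun n x => if x ∈ Icc a b then inner n (φ x) else 0, fun n => ?_, fun x hx => ?_⟩
  · apply ContinuousOn.if
    · intro z hz
      have : frontier {x : ℝ | x ∈ Icc a b} = {a, b} := by
        rw [show {x : ℝ | x ∈ Icc a b} = Icc a b from rfl, frontier_Icc hab.le]
      rw [this] at hz
      rcases hz.2 with rfl | rfl
      · rw [hφa, hinner0]
      · rw [hφb, hinner1]
    · have hcl : closure {x : ℝ | x ∈ Icc a b} = Icc a b := by
        rw [show {x : ℝ | x ∈ Icc a b} = Icc a b from rfl, isClosed_Icc.closure_eq]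
      rw [hcl]
      exact (hinnerc n).comp hφc.continuousOn (fun z hz => hmaps hz.2)
    · exact continuousOn_const
  · by_cases hmem : x ∈ Icc a b
    · simp only [if_pos hmem]
      have ht1 : Tendsto (fun n => gs n (φ x)) atTop (nhds (y' (φ x))) :=
        hgt (φ x) (hmaps hmem)
      have ht2 : Tendsto (fun n => gs n 0) atTop (nhds (y' 0)) :=
        hgt 0 ⟨le_refl 0, zero_le_one⟩
      have ht3 : Tendsto (fun n => gs n 1) atTop (nhds (y' 1)) :=
        hgt 1 ⟨zero_le_one, le_refl 1⟩
      have := (ht1.sub (((ht2.const_mul (1 - φ x)).add (ht3.const_mul (φ x))))).const_mul (1/4)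
      have hval : (1/4) * (y' (φ x) - ((1 - φ x) * y' 0 + φ x * y' 1)) = gprime y' a b x := by
        rw [gprime, if_pos hmem, h0', h1']
        ring
      rw [hval] at this
      exact this.congr (fun n => by simp [hinner])
    · simp only [if_neg hmem]
      have : gprime y' a b x = 0 := if_neg hmem
      rw [this]
      exact tendsto_const_nhds

lemma closed_main (y' : ℝ → ℝ) (h0' : y' 0 = 0) (h1' : y' 1 = 0)
    (a b : ℝ) (hab : a < b) (hsub : Set.Icc a b ⊆ Set.Icc (0:ℝ) 1)
    (hclosed : ∀ K : Set ℝ, K ⊆ Set.Icc (0:ℝ) 1 → IsClosed K → IsClosed (discSet y' K)) :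
    ∀ K : Set ℝ, K ⊆ Set.Icc (0:ℝ) 1 → IsClosed K →
      IsClosed (discSet (gprime y' a b) K) := by
  intro K hK hKc
  rw [discSet_restrict hab h0' h1' K]
  have hAc : IsClosed (K ∩ Icc a b) := hKc.inter isClosed_Icc
  have hAcomp : IsCompact (K ∩ Icc a b) :=
    isCompact_Icc.of_isClosed_subset hAc inter_subset_right
  set ψ := psiH a b hab with hψ
  set S : Set ℝ := ψ.symm '' (K ∩ Icc a b) with hS
  have hSA : ψ '' S = K ∩ Icc a b := by
    rw [hS, ← Set.image_comp, Homeomorph.self_comp_symm, Set.image_id]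
  have hScomp : IsCompact S := hAcomp.image ψ.symm.continuous
  have hSsub : S ⊆ Icc 0 1 := by
    rintro t ⟨z, hz, rfl⟩
    have : z ∈ ψ '' Icc 0 1 := (psiH_image_Icc01 hab) ▸ hz.2
    obtain ⟨u, hu, rfl⟩ := this
    simpa using hu
  rw [← hSA, discSet_transfer hab hSsub]
  have hd : IsClosed (discSet y' S) := hclosed S hSsub hScomp.isClosed
  have hdc : IsCompact (discSet y' S) :=
    hScomp.of_isClosed_subset hd (fun x hx => hx.1)
  exact (hdc.image ψ.continuous).isClosed


theorem statement8 (y y' : ℝ → ℝ) (hdiff : DiffOnIcc y y')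
    (hbdd : ∃ M : ℝ, ∀ x ∈ Set.Icc (0:ℝ) 1, |y' x| ≤ M)
    (hsolv : SolvableOn y' (Set.Icc (0:ℝ) 1))
    (h0 : y 0 = 0) (h1 : y 1 = 0) (h0' : y' 0 = 0) (h1' : y' 1 = 0)
    (a b : ℝ) (hab : a < b) (hsub : Set.Icc a b ⊆ Set.Icc (0:ℝ) 1) :
    ∃ g' : ℝ → ℝ,
      DiffOnIcc (fun x => (1/4) * rescale y a b x) g' ∧
      (∃ M : ℝ, ∀ x ∈ Set.Icc (0:ℝ) 1, |g' x| ≤ M) ∧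
      SolvableOn g' (Set.Icc (0:ℝ) 1) ∧
      solvRank g' = solvRank y' := by
  have hba : (0:ℝ) < b - a := sub_pos.2 hab
  refine ⟨gprime y' a b, diff_main y y' hdiff h0 h1 h0' h1' a b hab hsub, ?_, ?_, ?_⟩
  · obtain ⟨M, hM⟩ := hbdd
    have hM0 : 0 ≤ M := le_trans (abs_nonneg _) (hM 0 ⟨le_refl 0, zero_le_one⟩)
    refine ⟨M, fun x _ => ?_⟩
    by_cases hmem : x ∈ Set.Icc a b
    · have hφx : (x - a) / (b - a) ∈ Set.Icc (0:ℝ) 1 := by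
        constructor
        · exact div_nonneg (sub_nonneg.2 hmem.1) hba.le
        · rw [div_le_one hba]; linarith [hmem.2]
      have : gprime y' a b x = (1/4) * y' ((x - a) / (b - a)) := if_pos hmem
      rw [this, abs_mul]
      have h14 : |(1:ℝ)/4| = 1/4 := by norm_num
      rw [h14]
      have := hM _ hφx
      nlinarith [abs_nonneg (y' ((x - a) / (b - a)))]
    · have : gprime y' a b x = 0 := if_neg hmem
      rw [this, abs_zero]
      exact hM0
  · exact ⟨baire_main y' h0' h1' a b hab hsub hsolv.1,
      closed_main y' h0' h1' a b hab hsub hsolv.2⟩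
  · have hψsub : psiH a b hab '' Icc 0 1 ⊆ Icc (0:ℝ) 1 := by
      rw [psiH_image_Icc01 hab]; exact hsub
    have htrans := removed_transfer' (gprime y' a b) y' (psiH a b hab) hψsub
      (discSet_Icc01 hab h0' h1' hsub)
      (fun S hS => discSet_transfer hab hS)
    unfold solvRank
    congr 1
    ext α
    simp only [mem_setOf_eq]
    rcases eq_or_ne α 0 with rfl | hα
    · rw [removedSets_zero', removedSets_zero']
    · rw [htrans α (Ordinal.one_le_iff_ne_zero.2 hα), Set.image_eq_empty]

end
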